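/- The dihedral group D₈ of order 8 and the quaternion group Q₈ form a deformation pair: there exists an admissible action φ : D₈ → Aut(D₈) such that the deformed group (D₈)_φ, with multiplication g₁ ∘_φ g₂ = g₁ · φ(g₁)⁻¹(g₂), is isomorphic to the quaternion group Q₈. -/
import Mathlib


/-- The deformed multiplication `g₁ ∘_φ g₂ = g₁ · φ(g₁)⁻¹(g₂)`. -/
def dmul {G : Type*} [Group G] (φ : G →* MulAut G) (a b : G) : G :=
  a * (φ a)⁻¹ b

lemma dih_inv_r (i : ZMod 4) : (DihedralGroup.r i)⁻¹ = DihedralGroup.r (-i) := rfl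
lemma dih_inv_sr (i : ZMod 4) : (DihedralGroup.sr i)⁻¹ = DihedralGroup.sr i := rfl

/-- The automorphism of D₄ fixing rotations and shifting reflections by 2. -/
def alphaAut : MulAut (DihedralGroup 4) where
  toFun g := match g with
    | .r i => .r i
    | .sr i => .sr (i + 2)
  invFun g := match g with
    | .r i => .r i
    | .sr i => .sr (i - 2)
  left_inv g := by cases g <;> simp
  right_inv g := by cases g <;> simp
  map_mul' g h := by
    cases g <;> cases h <;>
      simp only [DihedralGroup.r_mul_r, DihedralGroup.r_mul_sr,
        DihedralGroup.sr_mul_r, DihedralGroup.sr_mul_sr] <;> congr 1 <;> ring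

lemma two_add_two : (2 : ZMod 4) + 2 = 0 := rfl

lemma alpha_sq : alphaAut * alphaAut = 1 := by
  ext g
  cases g with
  | r i => rfl
  | sr i =>
    show DihedralGroup.sr (i + 2 + 2) = DihedralGroup.sr i
    rw [add_assoc, two_add_two, add_zero]

/-- The admissible action φ. -/
def phi : DihedralGroup 4 →* MulAut (DihedralGroup 4) where
  toFun g := match g with
    | .r _ => 1
    | .sr _ => alphaAut
  map_one' := rfl
  map_mul' g h := by
    cases g <;> cases h <;>
      simp only [DihedralGroup.r_mul_r, DihedralGroup.r_mul_sr,
        DihedralGroup.sr_mul_r, DihedralGroup.sr_mul_sr, alpha_sq,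
        one_mul, mul_one]

theorem dihedral_quaternion_deformation :
    ∃ φ : DihedralGroup 4 →* MulAut (DihedralGroup 4),
      (∀ g h : DihedralGroup 4, φ ((φ (g⁻¹)) h) = φ (g⁻¹ * h * g)) ∧
      ∃ e : DihedralGroup 4 ≃ QuaternionGroup 2,
        ∀ g₁ g₂ : DihedralGroup 4, e (dmul φ g₁ g₂) = e g₁ * e g₂ := by
  refine ⟨phi, ?_, ⟨{
    toFun := fun g => match g with
      | .r i => QuaternionGroup.a i
      | .sr i => QuaternionGroup.xa i
    invFun := fun g => match g with
      | .a i => DihedralGroup.r i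
      | .xa i => DihedralGroup.sr i
    left_inv := fun g => by cases g <;> rfl
    right_inv := fun g => by cases g <;> rfl }, ?_⟩⟩
  · intro g h
    cases g <;> cases h <;>
      simp [phi, alphaAut, dih_inv_r, dih_inv_sr,
        DihedralGroup.r_mul_r, DihedralGroup.r_mul_sr,
        DihedralGroup.sr_mul_r, DihedralGroup.sr_mul_sr]
  · intro g₁ g₂
    cases g₁ <;> cases g₂ <;>
      simp [dmul, phi, alphaAut, DihedralGroup.r_mul_r, DihedralGroup.r_mul_sr,
        DihedralGroup.sr_mul_r, DihedralGroup.sr_mul_sr,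
        QuaternionGroup.a_mul_a, QuaternionGroup.a_mul_xa,
        QuaternionGroup.xa_mul_a, QuaternionGroup.xa_mul_xa] <;>
      congr 1 <;> ring
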